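/- For z in the upper half-plane with |z - 1/2| = 1/2 (apex of a right triangle with hypotenuse [0,1]), the Apollonius ratio α = |z-ρ|/|z-ρ⁻¹| satisfies α ≥ (√3-1)²/2, with equality exactly when z = 1/2 + i/2 (the right isosceles triangle); here ρ = exp(πi/3). -/

import Mathlib

open Complex Real

noncomputable def ρ : ℂ := Complex.exp (Real.pi * Complex.I / 3)

set_option maxHeartbeats 800000 in
theorem stmt17 (z : ℂ) (hzim : 0 < z.im) (hz : ‖z - 1 / 2‖ = 1 / 2) :
    (Real.sqrt 3 - 1) ^ 2 / 2 ≤ ‖z - ρ‖ / ‖z - ρ⁻¹‖ ∧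
    (‖z - ρ‖ / ‖z - ρ⁻¹‖ = (Real.sqrt 3 - 1) ^ 2 / 2 ↔
      z = 1 / 2 + Complex.I / 2) := by
  have hs : Real.sqrt 3 ^ 2 = 3 := Real.sq_sqrt (by norm_num)
  have hs1 : (1 : ℝ) < Real.sqrt 3 := by nlinarith [Real.sqrt_nonneg 3]
  have hρ : ρ = (1/2 : ℝ) + (Real.sqrt 3 / 2 : ℝ) * Complex.I := by
    unfold ρ
    rw [show (Real.pi : ℂ) * Complex.I / 3 = ((Real.pi/3 : ℝ) : ℂ) * Complex.I by
      push_cast; ring]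
    rw [Complex.exp_mul_I, ← Complex.ofReal_cos, ← Complex.ofReal_sin,
      Real.cos_pi_div_three, Real.sin_pi_div_three]
  have h3c : ((Real.sqrt 3 : ℂ))^2 = 3 := by
    norm_cast
  have hmul : ρ * ((1/2 : ℝ) - (Real.sqrt 3 / 2 : ℝ) * Complex.I) = 1 := by
    rw [hρ]
    push_cast
    linear_combination (-(Complex.I^2)/4) * h3c + (-3/4 : ℂ) * Complex.I_sq
  have hinv : ρ⁻¹ = (1/2 : ℝ) - (Real.sqrt 3 / 2 : ℝ) * Complex.I :=
    inv_eq_of_mul_eq_one_right hmul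
  set a := z.re with ha
  set b := z.im with hb
  have h1 : (a - 1/2)^2 + b^2 = 1/4 := by
    have h2 : ‖z - 1/2‖ ^ 2 = (1/2 : ℝ)^2 := by rw [hz]
    rw [Complex.sq_norm, Complex.normSq_apply] at h2
    simp only [Complex.sub_re, Complex.sub_im] at h2
    norm_num at h2
    linear_combination h2
  have hble : b ≤ 1/2 := by nlinarith
  have hA2 : ‖z - ρ‖ ^ 2 = 1 - Real.sqrt 3 * b := by
    rw [Complex.sq_norm, Complex.normSq_apply, hρ]
    simp only [Complex.sub_re, Complex.sub_im, Complex.add_re, Complex.add_im,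
      Complex.ofReal_re, Complex.ofReal_im, Complex.mul_re, Complex.mul_im,
      Complex.I_re, Complex.I_im]
    linear_combination h1 + hs/4
  have hB2 : ‖z - ρ⁻¹‖ ^ 2 = 1 + Real.sqrt 3 * b := by
    rw [Complex.sq_norm, Complex.normSq_apply, hinv]
    simp only [Complex.sub_re, Complex.sub_im, Complex.ofReal_re, Complex.ofReal_im,
      Complex.mul_re, Complex.mul_im, Complex.I_re, Complex.I_im]
    linear_combination h1 + hs/4
  set A := ‖z - ρ‖ with hA
  set B := ‖z - ρ⁻¹‖ with hB
  have hAnn : 0 ≤ A := norm_nonneg _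
  have hBnn : 0 ≤ B := norm_nonneg _
  have hBpos : 0 < B := by nlinarith
  have hc : (Real.sqrt 3 - 1) ^ 2 / 2 = 2 - Real.sqrt 3 := by linear_combination hs/2
  have hcpos : 0 < 2 - Real.sqrt 3 := by nlinarith
  have key0 : 0 ≤ (4 * Real.sqrt 3 - 6) * (1 - 2*b) :=
    mul_nonneg (by nlinarith) (by linarith)
  have hd : A^2 - ((2 - Real.sqrt 3)*B)^2 = (4 * Real.sqrt 3 - 6) * (1 - 2*b) := by
    rw [show ((2 - Real.sqrt 3) * B)^2 = (2 - Real.sqrt 3)^2 * B^2 from by ring, hA2, hB2]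
    linear_combination (4*b - 1 - Real.sqrt 3 * b) * hs
  have h4 : ((2 - Real.sqrt 3)*B)^2 ≤ A^2 := by linarith
  have hineq : (2 - Real.sqrt 3) * B ≤ A := by
    calc (2 - Real.sqrt 3) * B = Real.sqrt (((2 - Real.sqrt 3)*B)^2) :=
          (Real.sqrt_sq (by positivity)).symm
      _ ≤ Real.sqrt (A^2) := Real.sqrt_le_sqrt h4
      _ = A := Real.sqrt_sq hAnn
  constructor
  · rw [hc, le_div_iff₀ hBpos]
    linarith
  · rw [hc]
    constructor
    · intro heq
      rw [div_eq_iff (ne_of_gt hBpos)] at heq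
      have hsq : A^2 = (2 - Real.sqrt 3)^2 * B^2 := by rw [heq]; ring
      rw [hA2, hB2] at hsq
      have key : (4 * Real.sqrt 3 - 6) * (2*b - 1) = 0 := by
        linear_combination -hsq + (4*b - 1 - Real.sqrt 3 * b) * hs
      have hpos : 0 < 4 * Real.sqrt 3 - 6 := by nlinarith
      have hb12 : b = 1/2 := by
        rcases mul_eq_zero.mp key with h | h
        · linarith
        · linarith
      have ha12 : a = 1/2 := by nlinarith [sq_nonneg (a - 1/2)]
      apply Complex.ext
      · rw [← ha, ha12]
        simp [Complex.div_re]
      · rw [← hb, hb12]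
        simp [Complex.div_im]
    · intro hzeq
      have hb12 : b = 1/2 := by
        rw [hb, hzeq]
        simp [Complex.add_im, Complex.div_im]
      have hAeq : A = (2 - Real.sqrt 3) * B := by
        have h2 : A^2 = ((2 - Real.sqrt 3) * B)^2 := by
          rw [show ((2 - Real.sqrt 3) * B)^2 = (2 - Real.sqrt 3)^2 * B^2 from by ring,
            hA2, hB2, hb12]
          linear_combination (1 - Real.sqrt 3 / 2) * hs
        calc A = Real.sqrt (A^2) := (Real.sqrt_sq hAnn).symm
          _ = Real.sqrt (((2 - Real.sqrt 3) * B)^2) := by rw [h2]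
          _ = (2 - Real.sqrt 3) * B := Real.sqrt_sq (by positivity)
      rw [hAeq, mul_div_assoc, div_self (ne_of_gt hBpos), mul_one]
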